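/- arXiv:1608.04672 — 4 statements merged into one kernel-verified Lean document; each statement's English description precedes it below -/
import Mathlib

section
/- The set Tot of codes of total partial computable functions is not recursively enumerable: there is no total computable function f : ℕ → ℕ whose range equals { c | eval c n is defined for every n }. -/
/-- The partial computable function computed by the Gödel number `c`. -/
def evalN (c : ℕ) : ℕ →. ℕ :=
  Nat.Partrec.Code.eval (Denumerable.ofNat Nat.Partrec.Code c)

/-- The set `Tot` of codes of total partial computable functions is not
recursively enumerable: no total computable function has range `Tot`. -/
theorem stmt1 :
    ¬ ∃ f : ℕ → ℕ, Computable f ∧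
      Set.range f = {c : ℕ | ∀ n, (evalN c n).Dom} := by
  rintro ⟨f, hf, hrange⟩
  have hdom : ∀ n, (evalN (f n) n).Dom := fun n => by
    have : f n ∈ Set.range f := ⟨n, rfl⟩
    rw [hrange] at this
    exact this n
  -- the diagonal function
  set g : ℕ →. ℕ := fun n => (evalN (f n) n).map (· + 1) with hg
  have hgp : Partrec g := by
    have h1 : Partrec fun n => evalN (f n) n :=
      Nat.Partrec.Code.eval_part.comp ((Computable.ofNat _).comp hf) Computable.id
    exact h1.map (Computable.succ.comp Computable.snd).to₂
  obtain ⟨c, hc⟩ := Nat.Partrec.Code.exists_code.mp (Partrec.nat_iff.mp hgp)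
  have hmem : Encodable.encode c ∈ {c : ℕ | ∀ n, (evalN c n).Dom} := by
    intro n
    simp only [evalN, Denumerable.ofNat_encode, hc, hg, Part.map_Dom]
    exact hdom n
  rw [← hrange] at hmem
  obtain ⟨m, hm⟩ := hmem
  have heq : evalN (f m) m = g m := by
    rw [hm]; simp [evalN, hc]
  set x := (evalN (f m) m).get (hdom m) with hx
  have hx1 : x ∈ evalN (f m) m := Part.get_mem _
  have hx2 : x + 1 ∈ g m := by
    rw [hg]; exact Part.mem_map _ hx1
  rw [← heq] at hx2
  exact Nat.succ_ne_self x (Part.mem_unique hx2 hx1)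
end

section
/- The set Tot of codes of total partial computable functions is productive: there exists a total computable function ψ : ℕ → ℕ (mapping codes to codes) such that for every code i, if eval i is total and every value eval i n is a code of a total function, then ψ i is a code of a total function and ψ i is not in the range of eval i. -/
/-- A number `c` is a code of a total function. -/
def TotalCode (c : ℕ) : Prop := ∀ n, (evalN c n).Dom

open Nat.Partrec (Code)
open Nat.Partrec.Code

lemma evalN_partrec : Partrec₂ evalN :=
  eval_part.comp ((Computable.ofNat Code).comp Computable.fst) Computable.snd

/-- The diagonal function: `diagF (pair i n) = eval (eval i n) n + 1`. -/
def diagF : ℕ →. ℕ := fun k =>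
  (evalN k.unpair.1 k.unpair.2).bind fun m => (evalN m k.unpair.2).map (· + 1)

lemma diagF_partrec : Partrec diagF := by
  have h1 : Partrec fun k : ℕ => evalN k.unpair.1 k.unpair.2 :=
    evalN_partrec.comp (Computable.fst.comp Computable.unpair)
      (Computable.snd.comp Computable.unpair)
  exact h1.bind <| (evalN_partrec.comp Computable.snd
    ((Computable.snd.comp Computable.unpair).comp Computable.fst)).map
    (Computable.succ.comp Computable.snd).to₂

/-- The set of codes of total functions is productive: there is a total
computable `ψ` such that whenever `eval i` is total with all values codes of
total functions, `ψ i` is a code of a total function not in the range of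
`eval i`. -/
theorem stmt2 :
    ∃ ψ : ℕ → ℕ, Computable ψ ∧
      ∀ i : ℕ, (∀ n, (evalN i n).Dom) →
        (∀ n m, m ∈ evalN i n → TotalCode m) →
        TotalCode (ψ i) ∧ ∀ n, ψ i ∉ evalN i n := by
  obtain ⟨c, hc⟩ := Code.exists_code.1 (Partrec.nat_iff.1 diagF_partrec)
  refine ⟨fun i => Encodable.encode (curry c i), ?_, ?_⟩
  · exact Primrec.to_comp <| Primrec.encode.comp <|
      primrec₂_curry.comp (Primrec.const c) Primrec.id
  intro i hi hm
  have key : ∀ n, evalN (Encodable.encode (curry c i)) n =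
      (evalN i n).bind fun m => (evalN m n).map (· + 1) := by
    intro n
    simp only [evalN, Denumerable.ofNat_encode, eval_curry, hc, diagF,
      Nat.unpair_pair]
  have htot : TotalCode (Encodable.encode (curry c i)) := by
    intro n
    rw [key n]
    have h1 := hi n
    refine ⟨h1, ?_⟩
    have := hm n _ (Part.get_mem h1) n
    simpa using this
  refine ⟨htot, fun n hmem => ?_⟩
  have h1 := htot n
  set a := (evalN (Encodable.encode (curry c i)) n).get h1 with ha
  have ha1 : a ∈ evalN (Encodable.encode (curry c i)) n := Part.get_mem h1
  have ha2 : a + 1 ∈ evalN (Encodable.encode (curry c i)) n := by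
    rw [key n]
    exact Part.mem_bind hmem (Part.mem_map _ ha1)
  have := Part.mem_unique ha1 ha2
  omega
end

section
/- Every nonempty set A ⊆ ℕ admitting a productive function contains an infinite recursively enumerable subset: if A is nonempty and there is a partial computable ψ productive for A, then there exists a total computable function f : ℕ → ℕ whose range is an infinite subset of A. (The function is obtained by starting from a constant function into A and repeatedly applying the effective extension by ψ; the successively adjoined elements ψ-values are pairwise distinct.) -/
/-- `ψ` is a productive function for `A`. -/
def Productive (ψ : ℕ →. ℕ) (A : Set ℕ) : Prop :=
  ∀ i : ℕ, (∀ n, (evalN i n).Dom) → (∀ n m, m ∈ evalN i n → m ∈ A) →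
    ∃ y ∈ ψ i, y ∈ A ∧ ∀ n, y ∉ evalN i n

open Nat.Partrec (Code)
open Nat.Partrec.Code

/-- Every nonempty set with a partial computable productive function contains
an infinite recursively enumerable subset. -/
theorem stmt7 (A : Set ℕ) (hA : A.Nonempty) (ψ : ℕ →. ℕ) (hψ : Partrec ψ)
    (hprod : Productive ψ A) :
    ∃ f : ℕ → ℕ, Computable f ∧ Set.range f ⊆ A ∧ (Set.range f).Infinite := by
  obtain ⟨a, ha⟩ := hA
  -- the extension function, uniformly in a code c:  x ↦ if x = 0 then ψ c else evalN c (x-1)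
  set F : ℕ →. ℕ := fun p =>
    bif p.unpair.2 = 0 then ψ p.unpair.1 else evalN p.unpair.1 (p.unpair.2 - 1) with hF
  have hFpart : Partrec F := by
    apply Partrec.cond
    · exact (Primrec.eq.comp (Primrec.snd.comp Primrec.unpair) (Primrec.const 0)).decide.to_comp
    · exact hψ.comp (Computable.fst.comp Computable.unpair)
    · exact eval_part.comp
        ((Computable.ofNat Code).comp (Computable.fst.comp Computable.unpair))
        (Primrec.to_comp (Primrec.pred.comp (Primrec.snd.comp Primrec.unpair)))
  obtain ⟨e, he⟩ := Nat.Partrec.Code.exists_code.1 (Partrec.nat_iff.1 hFpart)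
  -- hN c : code of the extension of c
  set hN : ℕ → ℕ := fun c => Encodable.encode (curry e c) with hhN
  have hNeval : ∀ c x, evalN (hN c) x =
      bif x = 0 then ψ c else evalN c (x - 1) := by
    intro c x
    simp [evalN, hhN, Denumerable.ofNat_encode, eval_curry, he, hF]
  have hNcomp : Computable hN :=
    Primrec.to_comp <| Primrec.encode.comp <| primrec₂_curry.comp (Primrec.const e) Primrec.id
  -- the sequence of codes
  set c : ℕ → ℕ := fun k =>
    Nat.rec (Encodable.encode (Code.const a)) (fun _ ih => hN ih) k with hc
  have hccomp : Computable c :=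
    Computable.nat_rec Computable.id (Computable.const _)
      ((hNcomp.comp Computable.snd).comp Computable.snd).to₂
  have hc0 : ∀ n, evalN (c 0) n = Part.some a := by
    intro n; simp [hc, evalN, Denumerable.ofNat_encode, eval_const]
  have hcs : ∀ k, c (k + 1) = hN (c k) := fun k => rfl
  -- the invariant: each c k is total with range in A
  have key : ∀ k, (∀ n, (evalN (c k) n).Dom) ∧ (∀ n m, m ∈ evalN (c k) n → m ∈ A) := by
    intro k
    induction k with
    | zero =>
      constructor
      · intro n; rw [hc0]; trivial
      · intro n m hm; rw [hc0] at hm; exact (Part.mem_some_iff.1 hm) ▸ ha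
    | succ k ih =>
      obtain ⟨y, hy, hyA, hynot⟩ := hprod (c k) ih.1 ih.2
      constructor
      · intro n
        rw [hcs, hNeval]
        cases n with
        | zero => exact Part.dom_iff_mem.2 ⟨y, hy⟩
        | succ n => exact ih.1 n
      · intro n m hm
        rw [hcs, hNeval] at hm
        cases n with
        | zero =>
          simp only [Nat.zero_eq, if_pos rfl, cond_true] at hm
          rwa [Part.mem_unique hm hy]
        | succ n => exact ih.2 n m hm
  -- ψ restricted to the sequence of codes is total
  have hdom : ∀ k, (ψ (c k)).Dom := by
    intro k
    obtain ⟨y, hy, _, _⟩ := hprod (c k) (key k).1 (key k).2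
    exact Part.dom_iff_mem.2 ⟨y, hy⟩
  set f : ℕ → ℕ := fun k => (ψ (c k)).get (hdom k) with hf
  have hfmem : ∀ k, f k ∈ ψ (c k) := fun k => Part.get_mem _
  have hprops : ∀ k, f k ∈ A ∧ ∀ n, f k ∉ evalN (c k) n := by
    intro k
    obtain ⟨y, hy, hyA, hynot⟩ := hprod (c k) (key k).1 (key k).2
    have : f k = y := Part.mem_unique (hfmem k) hy
    rw [this]; exact ⟨hyA, hynot⟩
  -- f j appears in the range of evalN (c k) for j < k
  have hrange : ∀ j k, j < k → ∃ n, f j ∈ evalN (c k) n := by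
    intro j k hjk
    induction k with
    | zero => omega
    | succ k ih =>
      rcases Nat.lt_succ_iff_lt_or_eq.1 hjk with h | h
      · obtain ⟨n, hn⟩ := ih h
        refine ⟨n + 1, ?_⟩
        rw [hcs, hNeval]
        simpa using hn
      · refine ⟨0, ?_⟩
        rw [hcs, hNeval]
        subst h
        simpa using hfmem j
  have hinj : Function.Injective f := by
    intro j k hjk
    by_contra hne
    rcases Nat.lt_or_ge j k with h | h
    · obtain ⟨n, hn⟩ := hrange j k h
      rw [hjk] at hn
      exact (hprops k).2 n hn
    · have h' : k < j := lt_of_le_of_ne h (Ne.symm hne)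
      obtain ⟨n, hn⟩ := hrange k j h'
      rw [← hjk] at hn
      exact (hprops j).2 n hn
  have hfcomp : Computable f := by
    have : Partrec fun k => ψ (c k) := hψ.comp hccomp
    exact this.of_eq fun k => Part.eq_some_iff.2 (hfmem k)
  refine ⟨f, hfcomp, ?_, Set.infinite_range_of_injective hinj⟩
  rintro x ⟨k, rfl⟩
  exact (hprops k).1
end

section
/- Let A ⊆ ℕ admit a partial computable productive function ψ. Then the set B = { i | eval i is total and every value of eval i lies in A } of codes of total functions enumerating subsets of A is itself not recursively enumerable: there is no total computable function f : ℕ → ℕ whose range equals B. (If f enumerated B, the function g(⟨n,m⟩) = eval (f n) m would be total computable with range a subset of A; applying ψ to a code j of g and adjoining ψ(j) yields a code in B whose range contains an element outside every range of eval (f n), hence a code in B not in the range of f, a contradiction.) -/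
/-- The set of codes of total functions all of whose values lie in `A` is not
recursively enumerable, for any `A` admitting a partial computable productive
function. -/
theorem stmt8 (A : Set ℕ) (ψ : ℕ →. ℕ) (hψ : Partrec ψ)
    (hprod : Productive ψ A) :
    ¬ ∃ f : ℕ → ℕ, Computable f ∧
      Set.range f =
        {i : ℕ | (∀ n, (evalN i n).Dom) ∧ ∀ n m, m ∈ evalN i n → m ∈ A} := by
  rintro ⟨f, hf, hB⟩
  -- every f n is in B
  have hfB : ∀ n, (∀ m, (evalN (f n) m).Dom) ∧ ∀ m k, k ∈ evalN (f n) m → k ∈ A := by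
    intro n
    have : f n ∈ Set.range f := ⟨n, rfl⟩
    rw [hB] at this
    exact this
  -- the diagonal function g
  set g : ℕ →. ℕ := fun k => evalN (f k.unpair.1) k.unpair.2 with hg
  have hgp : Partrec g := by
    have := Nat.Partrec.Code.eval_part.comp
      ((Computable.ofNat Nat.Partrec.Code).comp
        (hf.comp (Computable.fst.comp Computable.unpair)))
      (Computable.snd.comp Computable.unpair)
    exact this
  obtain ⟨c, hc⟩ := Nat.Partrec.Code.exists_code.mp (Partrec.nat_iff.mp hgp)
  set j : ℕ := Encodable.encode c with hj
  have hej : evalN j = g := by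
    simp [evalN, hj, hc]
  have hjtot : ∀ n, (evalN j n).Dom := by
    intro n; rw [hej]; exact (hfB n.unpair.1).1 n.unpair.2
  have hjA : ∀ n m, m ∈ evalN j n → m ∈ A := by
    intro n m hm; rw [hej] at hm
    exact (hfB n.unpair.1).2 n.unpair.2 m hm
  obtain ⟨y, hyψ, hyA, hy⟩ := hprod j hjtot hjA
  -- the function h adjoining y
  set h : ℕ →. ℕ := fun k => Nat.casesOn k (Part.some y) (fun m => g m) with hh
  have hhp : Partrec h := by
    have := Partrec.nat_casesOn_right (f := fun k : ℕ => k)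
      (g := fun _ : ℕ => y) (h := fun _ m => g m)
      Computable.id (Computable.const y) (hgp.comp Computable.snd)
    exact this
  obtain ⟨d, hd⟩ := Nat.Partrec.Code.exists_code.mp (Partrec.nat_iff.mp hhp)
  set e : ℕ := Encodable.encode d with he
  have hee : evalN e = h := by simp [evalN, he, hd]
  have heB : e ∈ Set.range f := by
    rw [hB]
    constructor
    · intro n
      rw [hee]
      cases n with
      | zero => exact trivial
      | succ m =>
        have := hjtot m
        rw [hej] at this
        exact this
    · intro n m hm
      rw [hee] at hm
      cases n with
      | zero => simp [hh] at hm; exact hm ▸ hyA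
      | succ k => exact hjA k m (by rw [hej]; exact hm)
  obtain ⟨n, hn⟩ := heB
  -- y is a value of eval (f n) = eval e at 0, hence of g at ⟨n, 0⟩
  have hy0 : y ∈ evalN (f n) 0 := by
    rw [hn, hee]
    simp [hh]
  have : y ∈ evalN j (Nat.pair n 0) := by
    rw [hej]
    simp only [hg, Nat.unpair_pair]
    exact hy0
  exact hy _ this
end
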